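/- Let V be a finite-dimensional 𝔽₂-vector space with linear maps d, ι : V → V satisfying d∘d = 0, ι∘ι = id, d∘ι = ι∘d. Suppose V is the internal direct sum of subspaces V₀, …, V_N with ι(V_i) ⊆ V_i for all i, d(V_i) ⊆ V_{i+1} for i < N and d(V_N) = 0, and suppose for each i there is a subspace W_i ⊆ V_i such that V_i = W_i ⊕ ι(W_i). Then the Tate complex of V is acyclic: on 𝔽₂((h)) ⊗_𝔽₂ V with differential D(a ⊗ v) = a ⊗ d(v) + (h·a) ⊗ (v + ι(v)), one has ker D = im D. -/

import Mathlib

open TensorProduct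

instance : SMulCommClass (ZMod 2) (HahnSeries ℤ (ZMod 2)) (HahnSeries ℤ (ZMod 2)) :=
  ⟨fun r x y => (mul_smul_comm r x y).symm⟩

/-- Multiplication by the variable `h` on `𝔽₂((h))`, as an `𝔽₂`-linear map. -/
noncomputable def mulH : LaurentSeries (ZMod 2) →ₗ[ZMod 2] LaurentSeries (ZMod 2) where
  toFun a := (HahnSeries.single (1 : ℤ) (1 : ZMod 2)) * a
  map_add' a b := mul_add _ a b
  map_smul' r a := by simp [mul_smul_comm]

noncomputable def tateDaux {V : Type*} [AddCommGroup V] [Module (ZMod 2) V]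
    (d ι : V →ₗ[ZMod 2] V) :
    ((LaurentSeries (ZMod 2)) ⊗[ZMod 2] V) →ₗ[ZMod 2]
      ((LaurentSeries (ZMod 2)) ⊗[ZMod 2] V) :=
  TensorProduct.map LinearMap.id d + TensorProduct.map mulH (LinearMap.id + ι)

lemma tateDaux_smul {V : Type*} [AddCommGroup V] [Module (ZMod 2) V]
    (d ι : V →ₗ[ZMod 2] V) (c : LaurentSeries (ZMod 2))
    (x : (LaurentSeries (ZMod 2)) ⊗[ZMod 2] V) :
    tateDaux d ι (c • x) = c • tateDaux d ι x := by
  induction x using TensorProduct.induction_on with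
  | zero => simp
  | tmul a v =>
      rw [TensorProduct.smul_tmul']
      simp [tateDaux, mulH, TensorProduct.smul_tmul', smul_eq_mul, smul_add, mul_left_comm]
  | add x y hx hy =>
      rw [smul_add, map_add, hx, hy, map_add, smul_add]

/-- The Tate differential on `𝔽₂((h)) ⊗ V`: the `𝔽₂((h))`-linear map determined by
`D(a ⊗ v) = a ⊗ d(v) + (h·a) ⊗ (v + ι(v))`. -/
noncomputable def tateD {V : Type*} [AddCommGroup V] [Module (ZMod 2) V]
    (d ι : V →ₗ[ZMod 2] V) :
    ((LaurentSeries (ZMod 2)) ⊗[ZMod 2] V) →ₗ[LaurentSeries (ZMod 2)]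
      ((LaurentSeries (ZMod 2)) ⊗[ZMod 2] V) where
  toFun := tateDaux d ι
  map_add' x y := map_add _ x y
  map_smul' c x := tateDaux_smul d ι c x


/- ======= auxiliary lemmas ======= -/

lemma two_torsion_add_self {M : Type*} [AddCommMonoid M] [Module (ZMod 2) M] (x : M) :
    x + x = 0 := by
  have h : ((2 : ℕ) : ZMod 2) • x = (2 : ℕ) • x := Nat.cast_smul_eq_nsmul _ _ _
  have h2 : ((2 : ℕ) : ZMod 2) = 0 := by decide
  rw [h2, zero_smul, two_nsmul] at h
  exact h.symm

/-- Abstract acyclicity: if `D ∘ D = 0` and `D ∘ H + H ∘ D = 1 + E` with `E` nilpotent,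
in a 2-torsion endomorphism monoid, then `ker D = range D`. -/
lemma abstract_acyclic {R M : Type*} [CommRing R] [AddCommGroup M] [Module R M]
    (D H E : M →ₗ[R] M) (hDD : D ∘ₗ D = 0)
    (hhom : D ∘ₗ H + H ∘ₗ D = LinearMap.id + E)
    (hnil : ∃ n, E ^ n = 0)
    (hself : ∀ f : M →ₗ[R] M, f + f = 0) :
    LinearMap.ker D = LinearMap.range D := by
  obtain ⟨n, hn⟩ := hnil
  have hneg : ∀ f : M →ₗ[R] M, -f = f := fun f => neg_eq_of_add_eq_zero_left (hself f)
  set A : Module.End R M := 1 + E with hA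
  set B : Module.End R M := ∑ i ∈ Finset.range n, E ^ i with hB
  have hBA : B * A = 1 := by
    have hgs := geom_sum_mul E n
    rw [hn] at hgs
    have hEA : E - 1 = A := by rw [sub_eq_add_neg, hneg 1, hA, add_comm]
    rw [hEA] at hgs
    rw [hB, hgs, zero_sub, hneg 1]
  have hAB : A * B = 1 := by
    have hc : Commute A B := by
      apply Commute.add_left (Commute.one_left B)
      exact Commute.sum_right _ _ _ fun i _ => (Commute.refl E).pow_right i
    rw [hc.eq, hBA]
  have hDDm : D * D = 0 := hDD
  have hhomm : D * H + H * D = A := hhom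
  have hDA : D * A = A * D := by
    rw [← hhomm, mul_add, add_mul, ← mul_assoc, ← mul_assoc, hDDm, zero_mul,
      mul_assoc, mul_assoc, hDDm, mul_zero, zero_add, add_zero]
  have hDE : Commute D E := by
    have hE : E = A - 1 := by rw [hA]; abel
    show D * E = E * D
    rw [hE, mul_sub, sub_mul, hDA, mul_one, one_mul]
  have hDB : D * B = B * D :=
    (Commute.sum_right _ _ _ fun i _ => hDE.pow_right i).eq
  ext x
  constructor
  · intro hx
    rw [LinearMap.mem_ker] at hx
    refine ⟨B (H x), ?_⟩
    have h1 : A x = D (H x) := by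
      rw [← hhomm]
      show (D * H) x + (H * D) x = _
      rw [Module.End.mul_apply, Module.End.mul_apply, hx, map_zero, add_zero]
    calc D (B (H x)) = (D * B) (H x) := rfl
    _ = (B * D) (H x) := by rw [hDB]
    _ = B (A x) := by rw [Module.End.mul_apply, ← h1]
    _ = (B * A) x := rfl
    _ = x := by rw [hBA]; rfl
  · rintro ⟨y, rfl⟩
    rw [LinearMap.mem_ker]
    exact LinearMap.congr_fun hDD y

/-- Existence of a contracting homotopy for `1 + ι` preserving the pieces `Vsub i`. -/
lemma exists_sigma {V : Type*} [AddCommGroup V] [Module (ZMod 2) V]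
    (ι : V →ₗ[ZMod 2] V) (hii : ι ∘ₗ ι = LinearMap.id)
    (N : ℕ) (Vsub : ℕ → Submodule (ZMod 2) V)
    (hinternal : DirectSum.IsInternal (fun i : Fin (N + 1) => Vsub i.val))
    (hfree : ∀ i ≤ N, ∃ W : Submodule (ZMod 2) V,
      W ≤ Vsub i ∧ W ⊓ W.map ι = ⊥ ∧ W ⊔ W.map ι = Vsub i) :
    ∃ σ : V →ₗ[ZMod 2] V,
      ((LinearMap.id + ι) ∘ₗ σ + σ ∘ₗ (LinearMap.id + ι) = LinearMap.id) ∧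
      ∀ i ≤ N, ∀ x ∈ Vsub i, σ x ∈ Vsub i := by
  have hii' : ∀ x, ι (ι x) = x := fun x => LinearMap.congr_fun hii x
  choose Wf hWle hWd hWs using fun i : Fin (N + 1) => hfree i.val (Nat.lt_succ_iff.mp i.isLt)
  set W : Submodule (ZMod 2) V := ⨆ i, Wf i with hW
  have hmap : W.map ι = ⨆ i, (Wf i).map ι := Submodule.map_iSup _ _
  have hsup : W ⊔ W.map ι = ⊤ := by
    rw [hW, hmap, ← iSup_sup_eq]
    calc (⨆ i, Wf i ⊔ (Wf i).map ι) = ⨆ i : Fin (N+1), Vsub i.val :=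
          iSup_congr fun i => hWs i
    _ = ⊤ := hinternal.submodule_iSup_eq_top
  have hindep := hinternal.submodule_iSupIndep
  have hzero : ∀ c : Fin (N + 1) → V, (∀ i, c i ∈ Vsub i.val) → ∑ i, c i = 0 →
      ∀ i, c i = 0 := by
    intro c hc hsum i
    have hdis := iSupIndep_def.mp hindep i
    have h1 : c i ∈ Vsub i.val := hc i
    have h2 : c i ∈ ⨆ (j) (_ : j ≠ i), Vsub (j : Fin (N+1)).val := by
      have hrep : c i = -∑ j ∈ Finset.univ.erase i, c j := by
        have h := Finset.sum_erase_add Finset.univ c (Finset.mem_univ i)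
        rw [hsum] at h
        exact eq_neg_of_add_eq_zero_right h
      rw [hrep]
      refine neg_mem (Submodule.sum_mem _ fun j hj => ?_)
      have hji : j ≠ i := Finset.ne_of_mem_erase hj
      exact le_iSup₂ (f := fun (j : Fin (N+1)) (_ : j ≠ i) => Vsub j.val) j hji (hc j)
    exact (Submodule.disjoint_def.mp hdis) _ h1 h2
  have hdisj : W ⊓ W.map ι = ⊥ := by
    rw [eq_bot_iff]
    intro x hx
    obtain ⟨hx1, hx2⟩ := Submodule.mem_inf.mp hx
    rw [hW, Submodule.mem_iSup_iff_exists_finsupp] at hx1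
    rw [hmap, Submodule.mem_iSup_iff_exists_finsupp] at hx2
    obtain ⟨f, hf, hfs⟩ := hx1
    obtain ⟨g, hg, hgs⟩ := hx2
    rw [Finsupp.sum_fintype _ _ (fun _ => rfl)] at hfs hgs
    have hWVi : ∀ i : Fin (N+1), (Wf i).map ι ≤ Vsub i.val := fun i =>
      (hWs i) ▸ le_sup_right
    have hmem : ∀ i : Fin (N+1), f i - g i ∈ Vsub i.val := fun i =>
      Submodule.sub_mem _ (hWle i (hf i)) (hWVi i (hg i))
    have hsum0 : ∑ i, (f i - g i) = 0 := by
      rw [Finset.sum_sub_distrib, hfs, hgs, sub_self]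
    have hc := hzero _ hmem hsum0
    have hf0 : ∀ i, f i = 0 := by
      intro i
      have heq : f i = g i := by have := hc i; rwa [sub_eq_zero] at this
      have hbot : f i ∈ Wf i ⊓ (Wf i).map ι :=
        Submodule.mem_inf.mpr ⟨hf i, heq ▸ hg i⟩
      rw [hWd i] at hbot
      exact hbot
    rw [← hfs]
    simp [hf0]
  have hcompl : IsCompl W (W.map ι) :=
    ⟨disjoint_iff.mpr hdisj, codisjoint_iff.mpr hsup⟩
  set pr := (W.map ι).linearProjOfIsCompl W hcompl.symm with hpr
  set σ : V →ₗ[ZMod 2] V := ι ∘ₗ (W.map ι).subtype ∘ₗ pr with hσ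
  have hσW : ∀ w ∈ W, σ w = 0 := by
    intro w hw
    have h0 : pr w = 0 := Submodule.linearProjOfIsCompl_apply_right hcompl.symm ⟨w, hw⟩
    simp [hσ, h0]
  have hσιW : ∀ w ∈ W, σ (ι w) = w := by
    intro w hw
    have hmem : ι w ∈ W.map ι := Submodule.mem_map_of_mem hw
    have h1 : pr (ι w) = ⟨ι w, hmem⟩ :=
      Submodule.linearProjOfIsCompl_apply_left hcompl.symm ⟨ι w, hmem⟩
    simp [hσ, h1, hii']
  set L : V →ₗ[ZMod 2] V := (LinearMap.id + ι) ∘ₗ σ + σ ∘ₗ (LinearMap.id + ι) with hL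
  refine ⟨σ, ?_, ?_⟩
  · apply LinearMap.ext
    intro x
    have hx : x ∈ W ⊔ W.map ι := hsup ▸ Submodule.mem_top
    obtain ⟨a, ha, c, hc, rfl⟩ := Submodule.mem_sup.mp hx
    obtain ⟨b, hb, rfl⟩ := hc
    have key : L a = a := by
      simp only [hL, LinearMap.add_apply, LinearMap.comp_apply, LinearMap.id_apply]
      rw [hσW a ha, map_zero, zero_add, zero_add, map_add, hσW a ha, hσιW a ha, zero_add]
    have key2 : L (ι b) = ι b := by
      simp only [hL, LinearMap.add_apply, LinearMap.comp_apply, LinearMap.id_apply]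
      rw [hσιW b hb, map_add, hii', hσιW b hb, hσW b hb, add_zero,
        add_comm b (ι b), add_assoc, two_torsion_add_self b, add_zero]
    rw [map_add, key, key2, LinearMap.id_apply]
  · intro i hi x hxm
    have hxi : x ∈ Wf ⟨i, Nat.lt_succ_of_le hi⟩ ⊔ (Wf ⟨i, Nat.lt_succ_of_le hi⟩).map ι := by
      rw [hWs ⟨i, Nat.lt_succ_of_le hi⟩]; exact hxm
    obtain ⟨a, ha, c, hc, rfl⟩ := Submodule.mem_sup.mp hxi
    obtain ⟨b, hb, rfl⟩ := hc
    have haW : a ∈ W := le_iSup Wf _ ha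
    have hbW : b ∈ W := le_iSup Wf _ hb
    rw [map_add, hσW a haW, hσιW b hbW, zero_add]
    exact (hWle ⟨i, Nat.lt_succ_of_le hi⟩) hb

/-- Degree-shifting implies nilpotency of `d ∘ σ + σ ∘ d`. -/
lemma m_nilpotent {V : Type*} [AddCommGroup V] [Module (ZMod 2) V]
    (d σ : V →ₗ[ZMod 2] V)
    (N : ℕ) (Vsub : ℕ → Submodule (ZMod 2) V)
    (htop : (⨆ i : Fin (N + 1), Vsub i.val) = ⊤)
    (hdstep : ∀ i < N, ∀ x ∈ Vsub i, d x ∈ Vsub (i + 1))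
    (hdtop : ∀ x ∈ Vsub N, d x = 0)
    (hσinv : ∀ i ≤ N, ∀ x ∈ Vsub i, σ x ∈ Vsub i) :
    (d ∘ₗ σ + σ ∘ₗ d) ^ (N + 1) = 0 := by
  set m : V →ₗ[ZMod 2] V := d ∘ₗ σ + σ ∘ₗ d with hm
  set P : ℕ → Submodule (ZMod 2) V := fun n => ⨆ j ∈ Finset.Icc n N, Vsub j with hP
  have hP0 : ∀ x : V, x ∈ P 0 := by
    intro x
    have hle : (⊤ : Submodule (ZMod 2) V) ≤ P 0 := by
      rw [← htop]
      refine iSup_le fun i => ?_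
      exact le_iSup₂ (f := fun j (_ : j ∈ Finset.Icc 0 N) => Vsub j) i.val
        (Finset.mem_Icc.mpr ⟨Nat.zero_le _, Nat.lt_succ_iff.mp i.isLt⟩)
    exact hle Submodule.mem_top
  have hstep : ∀ n, ∀ x ∈ P n, m x ∈ P (n + 1) := by
    intro n x hx
    have hle : P n ≤ Submodule.comap m (P (n + 1)) := by
      refine iSup₂_le fun j hj => ?_
      obtain ⟨hnj, hjN⟩ := Finset.mem_Icc.mp hj
      intro y hy
      simp only [Submodule.mem_comap]
      have hmy : m y = d (σ y) + σ (d y) := rfl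
      rcases lt_or_eq_of_le hjN with hlt | heq
      · have h1 : σ y ∈ Vsub j := hσinv j hjN y hy
        have h2 : d (σ y) ∈ Vsub (j + 1) := hdstep j hlt _ h1
        have h3 : d y ∈ Vsub (j + 1) := hdstep j hlt _ hy
        have h4 : σ (d y) ∈ Vsub (j + 1) := hσinv (j + 1) hlt _ h3
        have h5 : m y ∈ Vsub (j + 1) := hmy ▸ Submodule.add_mem _ h2 h4
        exact le_iSup₂ (f := fun k (_ : k ∈ Finset.Icc (n+1) N) => Vsub k) (j + 1)
          (Finset.mem_Icc.mpr ⟨Nat.succ_le_succ hnj, hlt⟩) h5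
      · subst heq
        have h1 : σ y ∈ Vsub j := hσinv j le_rfl y hy
        have h2 : d (σ y) = 0 := hdtop _ h1
        have h3 : d y = 0 := hdtop _ hy
        rw [hmy, h2, h3, map_zero, add_zero]
        exact Submodule.zero_mem _
    exact hle hx
  have iter : ∀ k n (x : V), x ∈ P n → (m ^ k) x ∈ P (n + k) := by
    intro k
    induction k with
    | zero => intro n x hx; simpa using hx
    | succ k ih =>
        intro n x hx
        have hpow : (m ^ (k + 1)) x = (m ^ k) (m x) := by
          rw [pow_succ, Module.End.mul_apply]
        rw [hpow]
        have h := ih (n + 1) (m x) (hstep n x hx)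
        rwa [show n + 1 + k = n + (k + 1) by omega] at h
  have hPbot : P (N + 1) = ⊥ := by
    have hempty : Finset.Icc (N + 1) N = ∅ := Finset.Icc_eq_empty (by omega)
    rw [hP]
    simp [hempty]
  apply LinearMap.ext
  intro x
  have h := iter (N + 1) 0 x (hP0 x)
  rw [zero_add, hPbot] at h
  simpa using h

/-- Multiplication by a fixed Laurent series, as an `𝔽₂`-linear map. -/
noncomputable def mulC (c : LaurentSeries (ZMod 2)) :
    LaurentSeries (ZMod 2) →ₗ[ZMod 2] LaurentSeries (ZMod 2) where
  toFun a := c * a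
  map_add' a b := mul_add c a b
  map_smul' r a := by simp [mul_smul_comm]

lemma mulC_comp (c c' : LaurentSeries (ZMod 2)) : mulC c ∘ₗ mulC c' = mulC (c * c') :=
  LinearMap.ext fun a => (mul_assoc c c' a).symm

lemma mulC_one : mulC 1 = LinearMap.id :=
  LinearMap.ext fun a => one_mul a

lemma mulH_eq_mulC : mulH = mulC (HahnSeries.single (1 : ℤ) (1 : ZMod 2)) :=
  LinearMap.ext fun _ => rfl


/-- If a finite-dimensional ℤ/2-complex `V` decomposes as a direct sum
`V₀ ⊕ ⋯ ⊕ V_N` of ι-invariant subspaces with `d(Vᵢ) ⊆ Vᵢ₊₁`, `d(V_N) = 0`, and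
each `Vᵢ = Wᵢ ⊕ ι(Wᵢ)` for some subspace `Wᵢ`, then the Tate complex of `V` is
acyclic: `ker D = im D`. -/
theorem stmt6 {V : Type*} [AddCommGroup V] [Module (ZMod 2) V]
    [FiniteDimensional (ZMod 2) V]
    (d ι : V →ₗ[ZMod 2] V)
    (hdd : d ∘ₗ d = 0) (hii : ι ∘ₗ ι = LinearMap.id) (hdi : d ∘ₗ ι = ι ∘ₗ d)
    (N : ℕ) (Vsub : ℕ → Submodule (ZMod 2) V)
    (hinternal : DirectSum.IsInternal (fun i : Fin (N + 1) => Vsub i.val))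
    (hιinv : ∀ i ≤ N, ∀ x ∈ Vsub i, ι x ∈ Vsub i)
    (hdstep : ∀ i < N, ∀ x ∈ Vsub i, d x ∈ Vsub (i + 1))
    (hdtop : ∀ x ∈ Vsub N, d x = 0)
    (hfree : ∀ i ≤ N, ∃ W : Submodule (ZMod 2) V,
      W ≤ Vsub i ∧ W ⊓ W.map ι = ⊥ ∧ W ⊔ W.map ι = Vsub i) :
    LinearMap.ker (tateD d ι) = LinearMap.range (tateD d ι) := by
  have hii' : ∀ x, ι (ι x) = x := fun x => LinearMap.congr_fun hii x
  have hdi' : ∀ x, d (ι x) = ι (d x) := fun x => LinearMap.congr_fun hdi x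
  set hh : LaurentSeries (ZMod 2) := HahnSeries.single (1 : ℤ) (1 : ZMod 2) with hhh
  set hinv : LaurentSeries (ZMod 2) := HahnSeries.single (-1 : ℤ) (1 : ZMod 2) with hhinv
  have hmul1 : hh * hinv = 1 := by
    rw [hhh, hhinv, HahnSeries.single_mul_single]
    norm_num
  have hmul2 : hinv * hh = 1 := by
    rw [hhh, hhinv, HahnSeries.single_mul_single]
    norm_num
  have huu : (LinearMap.id + ι) ∘ₗ (LinearMap.id + ι) = (0 : V →ₗ[ZMod 2] V) := by
    apply LinearMap.ext; intro x
    simp only [LinearMap.add_apply, LinearMap.comp_apply, LinearMap.id_apply,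
      LinearMap.zero_apply, map_add]
    rw [hii' x, add_comm (ι x) x, two_torsion_add_self]
  have hud : d ∘ₗ (LinearMap.id + ι) + (LinearMap.id + ι) ∘ₗ d = (0 : V →ₗ[ZMod 2] V) := by
    apply LinearMap.ext; intro x
    simp only [LinearMap.add_apply, LinearMap.comp_apply, LinearMap.id_apply,
      LinearMap.zero_apply, map_add]
    rw [hdi' x, two_torsion_add_self]
  obtain ⟨σ, hσhom, hσinv⟩ := exists_sigma ι hii N Vsub hinternal hfree
  set m : V →ₗ[ZMod 2] V := d ∘ₗ σ + σ ∘ₗ d with hm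
  have hmnil : m ^ (N + 1) = 0 :=
    m_nilpotent d σ N Vsub hinternal.submodule_iSup_eq_top hdstep hdtop hσinv
  set D : ((LaurentSeries (ZMod 2)) ⊗[ZMod 2] V) →ₗ[ZMod 2]
      ((LaurentSeries (ZMod 2)) ⊗[ZMod 2] V) := tateDaux d ι with hDdef
  have hDeq : D = TensorProduct.map LinearMap.id d
      + TensorProduct.map mulH (LinearMap.id + ι) := rfl
  set H := TensorProduct.map (mulC hinv) σ with hHdef
  set E := TensorProduct.map (mulC hinv) (d ∘ₗ σ + σ ∘ₗ d) with hEdef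
  have hDD : D ∘ₗ D = 0 := by
    rw [hDeq, LinearMap.add_comp, LinearMap.comp_add, LinearMap.comp_add,
      ← TensorProduct.map_comp, ← TensorProduct.map_comp, ← TensorProduct.map_comp,
      ← TensorProduct.map_comp, hdd, TensorProduct.map_zero_right,
      LinearMap.id_comp, LinearMap.comp_id, huu, TensorProduct.map_zero_right,
      zero_add, add_zero, ← TensorProduct.map_add_right, hud,
      TensorProduct.map_zero_right]
  have h1 : D ∘ₗ H = TensorProduct.map (mulC hinv) (d ∘ₗ σ)
      + TensorProduct.map LinearMap.id ((LinearMap.id + ι) ∘ₗ σ) := by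
    rw [hDeq, hHdef, LinearMap.add_comp, ← TensorProduct.map_comp, ← TensorProduct.map_comp,
      LinearMap.id_comp, mulH_eq_mulC, mulC_comp, hmul1, mulC_one]
  have h2 : H ∘ₗ D = TensorProduct.map (mulC hinv) (σ ∘ₗ d)
      + TensorProduct.map LinearMap.id (σ ∘ₗ (LinearMap.id + ι)) := by
    rw [hDeq, hHdef, LinearMap.comp_add, ← TensorProduct.map_comp, ← TensorProduct.map_comp,
      LinearMap.comp_id, mulH_eq_mulC, mulC_comp, hmul2, mulC_one]
  have h3 : TensorProduct.map LinearMap.id ((LinearMap.id + ι) ∘ₗ σ)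
      + TensorProduct.map LinearMap.id (σ ∘ₗ (LinearMap.id + ι))
      = (LinearMap.id : ((LaurentSeries (ZMod 2)) ⊗[ZMod 2] V) →ₗ[ZMod 2]
          ((LaurentSeries (ZMod 2)) ⊗[ZMod 2] V)) := by
    rw [← TensorProduct.map_add_right, hσhom, TensorProduct.map_id]
  have h4 : TensorProduct.map (mulC hinv) (d ∘ₗ σ)
      + TensorProduct.map (mulC hinv) (σ ∘ₗ d) = E := by
    rw [hEdef, TensorProduct.map_add_right]
  have hhom : D ∘ₗ H + H ∘ₗ D = LinearMap.id + E := by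
    rw [h1, h2, ← h3, ← h4]
    abel
  have hnil : E ^ (N + 1) = 0 := by
    rw [hEdef, TensorProduct.map_pow, ← hm, hmnil, TensorProduct.map_zero_right]
  have hker := abstract_acyclic (R := ZMod 2)
    (M := (LaurentSeries (ZMod 2)) ⊗[ZMod 2] V) D H E hDD hhom ⟨N + 1, hnil⟩
    (fun f => two_torsion_add_self f)
  ext x
  simp only [LinearMap.mem_ker, LinearMap.mem_range]
  constructor
  · intro hx
    have hx' : x ∈ LinearMap.ker D := by
      rw [LinearMap.mem_ker]
      exact hx
    rw [hker] at hx'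
    obtain ⟨y, hy⟩ := hx'
    exact ⟨y, hy⟩
  · rintro ⟨y, rfl⟩
    exact LinearMap.congr_fun hDD y
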